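/- For every w ∈ D_n, the Demazure product of the simple generator s_n with w satisfies s_n ⋆ w = h_{n−1, [−n]}(s_n·w), where s_n·w is the ordinary product and [−n] is the one-element list. -/

import Mathlib

open Equiv

/-- The key of `a : ℤ` in the total order `1 < 2 < ⋯ < n < -n < ⋯ < -2 < -1` on `±[n]`:
elements of `±[n]` get the keys `1, …, 2n` (in order); anything else gets key `2n+1`. -/
def dkey (n : ℕ) (a : ℤ) : ℤ :=
  if 1 ≤ a ∧ a ≤ (n : ℤ) then a
  else if -(n : ℤ) ≤ a ∧ a ≤ -1 then 2 * n + 1 + a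
  else 2 * n + 1

/-- `a < b` in the total order `1 < 2 < ⋯ < n < -n < ⋯ < -2 < -1` on `±[n]`. -/
def dlt (n : ℕ) (a b : ℤ) : Prop := dkey n a < dkey n b

instance (n : ℕ) (a b : ℤ) : Decidable (dlt n a b) :=
  inferInstanceAs (Decidable (dkey n a < dkey n b))

/-- `a` is an element of `±[n] = {1,…,n} ∪ {-1,…,-n}`. -/
def inPM (n : ℕ) (a : ℤ) : Prop := a ≠ 0 ∧ |a| ≤ (n : ℤ)

instance (n : ℕ) (a : ℤ) : Decidable (inPM n a) :=
  inferInstanceAs (Decidable (a ≠ 0 ∧ |a| ≤ (n : ℤ)))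

/-- The element of `±[n]` whose key is `k` (for `1 ≤ k ≤ 2n`). -/
def ofKey (n : ℕ) (k : ℤ) : ℤ := if k ≤ (n : ℤ) then k else k - (2 * n + 1)

/-- A signed permutation of `±[n]`, viewed as a permutation of `ℤ`:
it commutes with negation and fixes everything outside `±[n]`. -/
def IsSignedPerm (n : ℕ) (w : Perm ℤ) : Prop :=
  (∀ a : ℤ, w (-a) = -(w a)) ∧ ∀ a : ℤ, (n : ℤ) < |a| → w a = a

/-- An even signed permutation of `±[n]`, i.e. an element of the group `D_n`. -/
def IsEvenSignedPerm (n : ℕ) (w : Perm ℤ) : Prop :=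
  IsSignedPerm n w ∧ Even ((Finset.Icc (1 : ℤ) (n : ℤ)).filter fun i => w i < 0).card

/-- The simple generators `s_1, …, s_n` of `D_n`:  for `1 ≤ i ≤ n-1`, `s_i` exchanges the
values `i ↔ i+1` and `-i ↔ -(i+1)`;  `s_n` exchanges the values `n-1 ↔ -n` and `n ↔ -(n-1)`. -/
def sgen (n i : ℕ) : Perm ℤ :=
  if i = n then Equiv.swap ((n : ℤ) - 1) (-(n : ℤ)) * Equiv.swap (n : ℤ) (-((n : ℤ) - 1))
  else Equiv.swap (i : ℤ) ((i : ℤ) + 1) * Equiv.swap (-(i : ℤ)) (-((i : ℤ) + 1))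

/-- The product `s_{l₁} s_{l₂} ⋯ s_{l_k}` of the word `l = [l₁, …, l_k]`. -/
def wordProd (n : ℕ) (l : List ℕ) : Perm ℤ := (l.map (sgen n)).prod

/-- The Coxeter length of `w ∈ D_n`: the least length of a word in `s_1, …, s_n` whose
product is `w`. -/
noncomputable def DLength (n : ℕ) (w : Perm ℤ) : ℕ :=
  sInf {k | ∃ l : List ℕ, (∀ i ∈ l, 1 ≤ i ∧ i ≤ n) ∧ l.length = k ∧ wordProd n l = w}

/-- `dem` is the Demazure product of the Coxeter group `D_n`: the (unique) associative
product on `D_n`, with identity `id`, such that for each simple generator `s` and `u ∈ D_n`,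
`s ⋆ u = s·u` if `ℓ(s·u) > ℓ(u)`, and `s ⋆ u = u` if `ℓ(s·u) < ℓ(u)`. -/
def IsDemazure (n : ℕ) (dem : Perm ℤ → Perm ℤ → Perm ℤ) : Prop :=
  (∀ u v, IsEvenSignedPerm n u → IsEvenSignedPerm n v → IsEvenSignedPerm n (dem u v)) ∧
  (∀ u v w, IsEvenSignedPerm n u → IsEvenSignedPerm n v → IsEvenSignedPerm n w →
      dem (dem u v) w = dem u (dem v w)) ∧
  (∀ u, IsEvenSignedPerm n u → dem 1 u = u ∧ dem u 1 = u) ∧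
  (∀ i, 1 ≤ i → i ≤ n → ∀ u, IsEvenSignedPerm n u →
      (DLength n u < DLength n (sgen n i * u) → dem (sgen n i) u = sgen n i * u) ∧
      (DLength n (sgen n i * u) < DLength n u → dem (sgen n i) u = u))

/-- The swap performed in one step of the hopping procedure: exchange the values `t ↔ q`
and simultaneously `-t ↔ -q` (unless `t = -q`). -/
def hswap (t q : ℤ) : Perm ℤ :=
  if t = -q then Equiv.swap t q else Equiv.swap t q * Equiv.swap (-t) (-q)

/-- `q` is eligible for hopping `t` in `w`: `q ∈ ±[n]`, `q > t` in the order on `±[n]`,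
and `q` occurs strictly to the right of `t` in the unfolding of `w`. -/
def HopStep (n : ℕ) (w : Perm ℤ) (t q : ℤ) : Prop :=
  inPM n q ∧ dlt n t q ∧ dkey n (w⁻¹ t) < dkey n (w⁻¹ q) ∧ dkey n (w⁻¹ q) ≤ 2 * n

instance (n : ℕ) (w : Perm ℤ) (t q : ℤ) : Decidable (HopStep n w t q) :=
  inferInstanceAs (Decidable
    (inPM n q ∧ dlt n t q ∧ dkey n (w⁻¹ t) < dkey n (w⁻¹ q) ∧ dkey n (w⁻¹ q) ≤ 2 * n))

theorem hop_measure (n : ℕ) (w : Perm ℤ) (t q : ℤ) (h : HopStep n w t q) :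
    (2 * (n : ℤ) + 1 - dkey n ((hswap t q * w)⁻¹ t)).toNat
      < (2 * (n : ℤ) + 1 - dkey n (w⁻¹ t)).toNat := by
  obtain ⟨⟨hq0, _⟩, _, hlt, hle⟩ := h
  have key : (hswap t q * w)⁻¹ t = w⁻¹ q := by
    have hs : (hswap t q)⁻¹ t = q := by
      unfold hswap
      split_ifs with he
      · subst he
        simp [Equiv.swap_inv, Equiv.swap_apply_left]
      · have h1 : q ≠ -t := fun hc => he (by omega)
        have h2 : q ≠ -q := fun hc => hq0 (by omega)
        simp [mul_inv_rev, Equiv.swap_inv, Equiv.Perm.mul_apply, Equiv.swap_apply_left,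
          Equiv.swap_apply_of_ne_of_ne h1 h2]
    rw [mul_inv_rev, Equiv.Perm.mul_apply, hs]
  rw [key]
  omega

/-- The hopping operator `h_{t,L}`: repeatedly pick the element `q` of `L`, occurring
latest in `L`, among those greater than `t` occurring strictly to the right of `t` in
the unfolding of `w`; swap the values `t ↔ q` (and `-t ↔ -q`, unless `t = -q`); stop
when no such `q` exists. -/
def hop (n : ℕ) (t : ℤ) (L : List ℤ) (w : Perm ℤ) : Perm ℤ :=
  match h : L.reverse.find? (fun q => decide (HopStep n w t q)) with
  | none => w
  | some q => hop n t L (hswap t q * w)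
termination_by (2 * (n : ℤ) + 1 - dkey n (w⁻¹ t)).toNat
decreasing_by
  have hq := List.find?_some h
  simp only [decide_eq_true_eq] at hq
  exact hop_measure n w t q hq

/-- The unfolding `[w(1), …, w(n), -w(n), …, -w(1)]` of a signed permutation `w`. -/
def unfoldList (n : ℕ) (w : Perm ℤ) : List ℤ :=
  (List.range (2 * n)).map fun p => w (ofKey n ((p : ℤ) + 1))

/-- `w ↖ t`: the ordered list of entries of the unfolding of `w` occurring strictly to the
left of the value `t` and lying strictly between `t` and `-t` in the order on `±[n]`. -/
def liftD (n : ℕ) (w : Perm ℤ) (t : ℤ) : List ℤ :=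
  ((unfoldList n w).take (dkey n (w⁻¹ t) - 1).toNat).filter
    fun a => decide (dlt n t a ∧ dlt n a (-t))

/-- `L ∼ₜ L'` : the hopping operators `h_{t,L}` and `h_{t,L'}` agree on all of `D_n`. -/
def HopEquiv (n : ℕ) (t : ℤ) (L L' : List ℤ) : Prop :=
  ∀ u : Perm ℤ, IsEvenSignedPerm n u → hop n t L u = hop n t L' u

/-- The list `[a, a+1, …, b]` (as integers). -/
def listUp (a b : ℕ) : List ℤ := (List.range (b + 1 - a)).map fun k => (a : ℤ) + k

/-- The list `[-b, -(b-1), …, -a]` (as integers). -/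
def listNegUp (a b : ℕ) : List ℤ := (List.range (b + 1 - a)).map fun k => -(b : ℤ) + k

/-- For `1 ≤ i ≤ n-2` : `Q` is one of the minimal coset representatives
(form 0: `id`; form 1: `s_i ⋯ s_j`; form 2: `s_i ⋯ s_{n-2} s_n s_{n-1} ⋯ s_j`;
form 3: `s_i ⋯ s_{n-2} s_n`). -/
def QForm (n i : ℕ) (Q : Perm ℤ) : Prop :=
  Q = 1 ∨
  (∃ j, i ≤ j ∧ j ≤ n - 1 ∧ Q = wordProd n (List.range' i (j + 1 - i))) ∨
  (∃ j, i ≤ j ∧ j ≤ n - 1 ∧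
    Q = wordProd n (List.range' i (n - 1 - i) ++ [n] ++ (List.range' j (n - j)).reverse)) ∨
  Q = wordProd n (List.range' i (n - 1 - i) ++ [n])

/-- `Q` is one of the four elements `id`, `s_{n-1}`, `s_n s_{n-1}`, `s_n` of
`W_{{s_{n-1}, s_n}}`. -/
def QFormTop (n : ℕ) (Q : Perm ℤ) : Prop :=
  Q = 1 ∨ Q = sgen n (n - 1) ∨ Q = sgen n n * sgen n (n - 1) ∨ Q = sgen n n

/-- For `1 ≤ i ≤ n-2`: `(Q, L)` is a factor of a parabolic factorization together with
its associated list `L_i`. -/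
def QList (n i : ℕ) (Q : Perm ℤ) (L : List ℤ) : Prop :=
  (Q = 1 ∧ L = []) ∨
  (∃ j, i ≤ j ∧ j ≤ n - 1 ∧ Q = wordProd n (List.range' i (j + 1 - i)) ∧
    L = listUp (i + 1) (j + 1)) ∨
  (∃ j, i ≤ j ∧ j ≤ n - 1 ∧
    Q = wordProd n (List.range' i (n - 1 - i) ++ [n] ++ (List.range' j (n - j)).reverse) ∧
    L = listUp (i + 1) n ++ listNegUp (j + 1) n) ∨
  (Q = wordProd n (List.range' i (n - 1 - i) ++ [n]) ∧
    L = listUp (i + 1) (n - 1) ++ [-(n : ℤ)])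

/-- `(Q, L)` is the top factor `Q_{n-1}` of a parabolic factorization together with its
associated list `L_{n-1}`. -/
def QListTop (n : ℕ) (Q : Perm ℤ) (L : List ℤ) : Prop :=
  (Q = 1 ∧ L = []) ∨ (Q = sgen n (n - 1) ∧ L = [(n : ℤ)]) ∨
  (Q = sgen n n * sgen n (n - 1) ∧ L = [(n : ℤ), -(n : ℤ)]) ∨
  (Q = sgen n n ∧ L = [-(n : ℤ)])

/-- The partial product `Q_{n-1} Q_{n-2} ⋯ Q_k` of a parabolic factorization. -/
def prodQ (n : ℕ) (Q : ℕ → Perm ℤ) (k : ℕ) : Perm ℤ :=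
  (((List.range' k (n - k)).reverse).map Q).prod

/-- The letterwise extended Demazure action of the generator `s_i` (for `1 ≤ i ≤ n-1`) on an
arbitrary signed permutation: `s_i ⋆ u = s_i·u` if the value `i` occurs strictly to the left
of the value `i+1` in the unfolding of `u`, and `u` otherwise. -/
def demStep (n i : ℕ) (u : Perm ℤ) : Perm ℤ :=
  if dkey n (u⁻¹ (i : ℤ)) < dkey n (u⁻¹ ((i : ℤ) + 1)) then sgen n i * u else u

/-- The letterwise extended Demazure action of a word:
`(s_{a₁} ⋯ s_{a_k}) ⋆ u = s_{a₁} ⋆ (s_{a₂} ⋆ (⋯ (s_{a_k} ⋆ u)))`. -/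
def demWord (n : ℕ) (l : List ℕ) (u : Perm ℤ) : Perm ℤ := l.foldr (demStep n) u

/-- A member of the symmetric group on `±[n]`, viewed as a permutation of `ℤ`:
it fixes `0` and everything of absolute value `> n`. -/
def IsPermPM (n : ℕ) (w : Perm ℤ) : Prop := ∀ a : ℤ, a = 0 ∨ (n : ℤ) < |a| → w a = a

/-- The simple generators of the symmetric group on `±[n]` (type `A_{2n-1}`):
`agen n k` (for `1 ≤ k ≤ 2n-1`) transposes the order-adjacent elements of `±[n]`
with keys `k` and `k+1`. -/
def agen (n k : ℕ) : Perm ℤ := Equiv.swap (ofKey n (k : ℤ)) (ofKey n ((k : ℤ) + 1))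

/-- The Coxeter length of an element of the symmetric group on `±[n]`. -/
noncomputable def ALength (n : ℕ) (w : Perm ℤ) : ℕ :=
  sInf {k | ∃ l : List ℕ, (∀ i ∈ l, 1 ≤ i ∧ i ≤ 2 * n - 1) ∧ l.length = k ∧
    (l.map (agen n)).prod = w}

/-- `dem` is the Demazure product of the symmetric group on `±[n]`, viewed as a Coxeter
group of type `A_{2n-1}` with simple generators the transpositions of order-adjacent
elements of `±[n]`. -/
def IsDemazureA (n : ℕ) (dem : Perm ℤ → Perm ℤ → Perm ℤ) : Prop :=
  (∀ u v, IsPermPM n u → IsPermPM n v → IsPermPM n (dem u v)) ∧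
  (∀ u v w, IsPermPM n u → IsPermPM n v → IsPermPM n w →
      dem (dem u v) w = dem u (dem v w)) ∧
  (∀ u, IsPermPM n u → dem 1 u = u ∧ dem u 1 = u) ∧
  (∀ k, 1 ≤ k → k ≤ 2 * n - 1 → ∀ u, IsPermPM n u →
      (ALength n u < ALength n (agen n k * u) → dem (agen n k) u = agen n k * u) ∧
      (ALength n (agen n k * u) < ALength n u → dem (agen n k) u = u))


theorem Equiv.Perm.apply_inv_self (f : Perm ℤ) (x : ℤ) : f (f⁻¹ x) = x := f.apply_symm_apply x

theorem Equiv.Perm.inv_apply_self (f : Perm ℤ) (x : ℤ) : f⁻¹ (f x) = x := f.symm_apply_apply x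

namespace DnAux

lemma sgen_lt_apply {n r : ℕ} (h1 : 1 ≤ r) (h2 : r < n) (v : ℤ) :
    sgen n r v = if v = (r:ℤ) then (r:ℤ)+1 else if v = (r:ℤ)+1 then (r:ℤ)
      else if v = -(r:ℤ) then -((r:ℤ)+1) else if v = -((r:ℤ)+1) then -(r:ℤ) else v := by
  have hrn : r ≠ n := by omega
  simp only [sgen, if_neg hrn, Equiv.Perm.mul_apply, Equiv.swap_apply_def]
  split_ifs <;> omega

lemma sgen_n_apply {n : ℕ} (hn : 2 ≤ n) (v : ℤ) :
    sgen n n v = if v = (n:ℤ)-1 then -(n:ℤ) else if v = (n:ℤ) then -((n:ℤ)-1)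
      else if v = -((n:ℤ)-1) then (n:ℤ) else if v = -(n:ℤ) then (n:ℤ)-1 else v := by
  simp only [sgen, if_pos rfl, ite_true, Equiv.Perm.mul_apply, Equiv.swap_apply_def]
  split_ifs <;> omega

lemma sgen_sq {n r : ℕ} (hn : 2 ≤ n) (h1 : 1 ≤ r) (h2 : r ≤ n) :
    sgen n r * sgen n r = 1 := by
  apply Equiv.ext
  intro x
  simp only [Equiv.Perm.mul_apply, Equiv.Perm.one_apply]
  rcases eq_or_lt_of_le h2 with he | hlt
  · subst he; simp only [sgen_n_apply hn]; split_ifs <;> omega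
  · simp only [sgen_lt_apply h1 hlt]; split_ifs <;> omega

lemma sp_zero {n : ℕ} {w : Perm ℤ} (h : IsSignedPerm n w) : w 0 = 0 := by
  have h0 := h.1 0
  rw [neg_zero] at h0
  omega

lemma sp_ne_zero {n : ℕ} {w : Perm ℤ} (h : IsSignedPerm n w) {a : ℤ}
    (ha : a ≠ 0) : w a ≠ 0 := by
  intro hc
  exact ha (w.injective (hc.trans (sp_zero h).symm))

lemma sp_abs_le {n : ℕ} {w : Perm ℤ} (h : IsSignedPerm n w) {a : ℤ}
    (ha : |a| ≤ (n:ℤ)) : |w a| ≤ (n:ℤ) := by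
  by_contra hc
  push_neg at hc
  have h2 := h.2 (w a) hc
  have h3 := w.injective h2
  rw [h3] at hc
  omega

lemma sp_inv {n : ℕ} {w : Perm ℤ} (h : IsSignedPerm n w) :
    IsSignedPerm n w⁻¹ := by
  constructor
  · intro a
    apply w.injective
    rw [Equiv.Perm.apply_inv_self, h.1, Equiv.Perm.apply_inv_self]
  · intro a ha
    have := h.2 a ha
    rw [Equiv.Perm.inv_eq_iff_eq]
    exact this.symm

lemma sp_mul {n : ℕ} {u v : Perm ℤ} (hu : IsSignedPerm n u)
    (hv : IsSignedPerm n v) : IsSignedPerm n (u * v) := by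
  constructor
  · intro a; rw [Equiv.Perm.mul_apply, Equiv.Perm.mul_apply, hv.1, hu.1]
  · intro a ha
    rw [Equiv.Perm.mul_apply, hv.2 a ha, hu.2 a ha]

lemma sp_one {n : ℕ} : IsSignedPerm n (1 : Perm ℤ) :=
  ⟨fun a => rfl, fun a _ => rfl⟩

lemma sgen_signed {n r : ℕ} (hn : 2 ≤ n) (h1 : 1 ≤ r) (h2 : r ≤ n) :
    IsSignedPerm n (sgen n r) := by
  rcases eq_or_lt_of_le h2 with he | hlt
  · subst he
    constructor
    · intro a; simp only [sgen_n_apply hn]; split_ifs <;> omega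
    · intro a ha
      rcases lt_abs.mp ha with h | h <;>
        (simp only [sgen_n_apply hn]; split_ifs <;> omega)
  · constructor
    · intro a; simp only [sgen_lt_apply h1 hlt]; split_ifs <;> omega
    · intro a ha
      rcases lt_abs.mp ha with h | h <;>
        (simp only [sgen_lt_apply h1 hlt]; split_ifs <;> omega)

/-- values at positions: `w |w⁻¹ c| = ± c`. -/
lemma val_at_pos {n : ℕ} {w : Perm ℤ} (hw : IsSignedPerm n w) (c : ℤ) : w |w⁻¹ c| = c ∨ w |w⁻¹ c| = -c := by
  rcases abs_cases (w⁻¹ c) with ⟨e, _⟩ | ⟨e, _⟩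
  · left; rw [e, Equiv.Perm.apply_inv_self]
  · right; rw [e]
    have := hw.1 (w⁻¹ c)
    rw [Equiv.Perm.apply_inv_self] at this
    rw [this]

lemma pos_unique {n : ℕ} {w : Perm ℤ} (hw : IsSignedPerm n w) {c i : ℤ}
    (hi : w i = c ∨ w i = -c) : |w⁻¹ c| = |i| := by
  rcases hi with hi | hi
  · rw [← hi, Equiv.Perm.inv_apply_self]
  · have : w (-i) = c := by rw [hw.1, hi, neg_neg]
    rw [← this, Equiv.Perm.inv_apply_self, abs_neg]

/-- The pairwise length contribution. -/
def fpair (a b : ℤ) : ℕ :=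
  (if 0 < a ∧ 0 < b ∧ b < a then 1 else 0) +
  (if a < 0 ∧ b < 0 then 1 else 0) + (if a < 0 ∧ b < 0 ∧ b < a then 1 else 0) +
  (if a < 0 ∧ 0 < b then 1 else 0) + (if a < 0 ∧ 0 < b ∧ 0 < a + b then 1 else 0) +
  (if 0 < a ∧ b < 0 ∧ 0 < a + b then 1 else 0)

lemma fpair_pp {a b : ℤ} (ha : 0 < a) (hb : 0 < b) :
    fpair a b = if b < a then 1 else 0 := by
  simp only [fpair]; split_ifs <;> omega

lemma fpair_pn {a b : ℤ} (ha : 0 < a) (hb : b < 0) :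
    fpair a b = if 0 < a + b then 1 else 0 := by
  simp only [fpair]; split_ifs <;> omega

lemma fpair_np {a b : ℤ} (ha : a < 0) (hb : 0 < b) :
    fpair a b = 1 + if 0 < a + b then 1 else 0 := by
  simp only [fpair]; split_ifs <;> omega

lemma fpair_nn {a b : ℤ} (ha : a < 0) (hb : b < 0) :
    fpair a b = 1 + if b < a then 1 else 0 := by
  simp only [fpair]; split_ifs <;> omega

lemma fpair_congr_left {a a' b : ℤ} (h1 : 0 < a ↔ 0 < a') (h2 : a < 0 ↔ a' < 0)
    (h3 : b < a ↔ b < a') (h4 : 0 < a + b ↔ 0 < a' + b) :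
    fpair a b = fpair a' b := by
  simp only [fpair, h1, h2, h3, h4]

lemma fpair_congr_right {a b b' : ℤ} (h1 : 0 < b ↔ 0 < b') (h2 : b < 0 ↔ b' < 0)
    (h3 : b < a ↔ b' < a) (h4 : 0 < a + b ↔ 0 < a + b') :
    fpair a b = fpair a b' := by
  simp only [fpair, h1, h2, h3, h4]

/-- The set of ordered position pairs. -/
noncomputable def pairsD (n : ℕ) : Finset (ℤ × ℤ) :=
  ((Finset.Icc (1:ℤ) (n:ℤ)) ×ˢ (Finset.Icc (1:ℤ) (n:ℤ))).filter fun x => x.1 < x.2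

lemma mem_pairsD {n : ℕ} {x : ℤ × ℤ} :
    x ∈ pairsD n ↔ (1 ≤ x.1 ∧ x.1 ≤ (n:ℤ)) ∧ (1 ≤ x.2 ∧ x.2 ≤ (n:ℤ)) ∧ x.1 < x.2 := by
  simp [pairsD, Finset.mem_filter, Finset.mem_product, Finset.mem_Icc, and_assoc]

/-- The length statistic. -/
noncomputable def MStat (n : ℕ) (w : Perm ℤ) : ℕ := ∑ x ∈ pairsD n, fpair (w x.1) (w x.2)

lemma MStat_one {n : ℕ} : MStat n 1 = 0 := by
  apply Finset.sum_eq_zero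
  intro x hx
  rw [mem_pairsD] at hx
  simp only [Equiv.Perm.one_apply]
  rw [fpair_pp (by omega) (by omega), if_neg (by omega)]

lemma dkey_pos' {n : ℕ} {x : ℤ} (h1 : 1 ≤ x) (h2 : x ≤ (n:ℤ)) : dkey n x = x := by
  simp only [dkey]; split_ifs <;> omega

lemma dkey_neg' {n : ℕ} {x : ℤ} (h1 : 1 ≤ x) (h2 : x ≤ (n:ℤ)) :
    dkey n (-x) = 2*n+1-x := by
  simp only [dkey]; split_ifs <;> omega

lemma dkey_bounds {n : ℕ} {x : ℤ} (h0 : x ≠ 0) (hx : |x| ≤ (n:ℤ)) :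
    1 ≤ dkey n x ∧ dkey n x ≤ 2*n := by
  rcases abs_cases x with ⟨e1, e2⟩ | ⟨e1, e2⟩ <;>
    (simp only [dkey]; split_ifs <;> omega)

lemma dkey_inj' {n : ℕ} {x y : ℤ} (hx0 : x ≠ 0) (hx : |x| ≤ (n:ℤ))
    (hy0 : y ≠ 0) (hy : |y| ≤ (n:ℤ)) (h : dkey n x = dkey n y) : x = y := by
  rcases abs_cases x with ⟨e1, e2⟩ | ⟨e1, e2⟩ <;> rcases abs_cases y with ⟨f1, f2⟩ | ⟨f1, f2⟩ <;>
    (simp only [dkey] at h; split_ifs at h <;> omega)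

lemma dkey_neg_eq {n : ℕ} {x : ℤ} (h0 : x ≠ 0) (hx : |x| ≤ (n:ℤ)) :
    dkey n (-x) = 2*n+1 - dkey n x := by
  rcases abs_cases x with ⟨e1, e2⟩ | ⟨e1, e2⟩ <;>
    (simp only [dkey]; split_ifs <;> omega)

lemma master {n : ℕ} {w : Perm ℤ} (hw : IsSignedPerm n w) (g : Perm ℤ) {c₁ c₂ : ℤ}
    (hc1 : 1 ≤ c₁) (hcc : c₁ < c₂) (hc2 : c₂ ≤ (n:ℤ))
    (hgfix : ∀ v : ℤ, v ≠ c₁ → v ≠ -c₁ → v ≠ c₂ → v ≠ -c₂ → g v = v)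
    (hinv : ∀ u v : ℤ, (u = c₁ ∨ u = -c₁ ∨ u = c₂ ∨ u = -c₂) →
       v ≠ 0 → -(n:ℤ) ≤ v → v ≤ (n:ℤ) → v ≠ c₁ → v ≠ -c₁ → v ≠ c₂ → v ≠ -c₂ →
       fpair (g u) v = fpair u v ∧ fpair v (g u) = fpair v u)
    {p q : ℤ} (hp : p = min |w⁻¹ c₁| |w⁻¹ c₂| ) (hq : q = max |w⁻¹ c₁| |w⁻¹ c₂| ) :
    MStat n (g * w) + fpair (w p) (w q) = MStat n w + fpair (g (w p)) (g (w q)) := by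
  have hwinv := sp_inv hw
  have hc10 : c₁ ≠ 0 := by omega
  have hc20 : c₂ ≠ 0 := by omega
  have hx1 : |w⁻¹ c₁| ≤ (n:ℤ) := sp_abs_le hwinv (by rw [abs_of_pos (by omega)]; omega)
  have hx2 : |w⁻¹ c₂| ≤ (n:ℤ) := sp_abs_le hwinv (by rw [abs_of_pos (by omega)]; omega)
  have hx10 : w⁻¹ c₁ ≠ 0 := sp_ne_zero hwinv hc10
  have hx20 : w⁻¹ c₂ ≠ 0 := sp_ne_zero hwinv hc20
  set a := |w⁻¹ c₁| with hadef
  set b := |w⁻¹ c₂| with hbdef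
  have ha1 : 1 ≤ a := by rcases abs_cases (w⁻¹ c₁) with ⟨e1,e2⟩|⟨e1,e2⟩ <;> omega
  have hb1 : 1 ≤ b := by rcases abs_cases (w⁻¹ c₂) with ⟨e1,e2⟩|⟨e1,e2⟩ <;> omega
  have hva := val_at_pos hw c₁
  have hvb := val_at_pos hw c₂
  rw [← hadef] at hva
  rw [← hbdef] at hvb
  have hab : a ≠ b := by
    intro he
    rw [he] at hva
    rcases hva with h | h <;> rcases hvb with h' | h' <;> rw [h] at h' <;> omega
  have hpq : p < q := by omega
  have hs : (p, q) ∈ pairsD n := by rw [mem_pairsD]; constructor <;> [omega; constructor <;> [omega; exact hpq]]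
  -- values away from the special positions avoid the four special values
  have hnotspec : ∀ i : ℤ, 1 ≤ i → i ≤ (n:ℤ) → i ≠ a → i ≠ b →
      w i ≠ c₁ ∧ w i ≠ -c₁ ∧ w i ≠ c₂ ∧ w i ≠ -c₂ := by
    intro i hi1 hi2 hia hib
    refine ⟨?_, ?_, ?_, ?_⟩ <;> intro hv
    · have := pos_unique hw (Or.inl hv); rw [← hadef, abs_of_pos (by omega)] at this; omega
    · have := pos_unique hw (Or.inr hv); rw [← hadef, abs_of_pos (by omega)] at this; omega
    · have := pos_unique hw (Or.inl hv); rw [← hbdef, abs_of_pos (by omega)] at this; omega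
    · have := pos_unique hw (Or.inr hv); rw [← hbdef, abs_of_pos (by omega)] at this; omega
  have hspecval : ∀ i : ℤ, i = a ∨ i = b →
      (w i = c₁ ∨ w i = -c₁ ∨ w i = c₂ ∨ w i = -c₂) := by
    intro i hi
    rcases hi with hi | hi <;> subst hi
    · rcases hva with h | h
      · exact Or.inl h
      · exact Or.inr (Or.inl h)
    · rcases hvb with h | h
      · exact Or.inr (Or.inr (Or.inl h))
      · exact Or.inr (Or.inr (Or.inr h))
  have key : ∀ x : ℤ × ℤ, x ∈ (pairsD n).erase (p, q) →
      fpair (g (w x.1)) (g (w x.2)) = fpair (w x.1) (w x.2) := by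
    intro x hx
    have hxne := Finset.ne_of_mem_erase hx
    have hxm := Finset.mem_of_mem_erase hx
    rw [mem_pairsD] at hxm
    obtain ⟨⟨h11, h12⟩, ⟨h21, h22⟩, hlt⟩ := hxm
    by_cases hs1 : x.1 = a ∨ x.1 = b <;> by_cases hs2 : x.2 = a ∨ x.2 = b
    · exfalso
      apply hxne
      have e1 : x.1 = p := by omega
      have e2 : x.2 = q := by omega
      rw [← e1, ← e2]
    · push_neg at hs2
      obtain ⟨hv1, hv2, hv3, hv4⟩ := hnotspec x.2 h21 h22 hs2.1 hs2.2
      have hvz : w x.2 ≠ 0 := sp_ne_zero hw (by omega)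
      have hvb2 : |w x.2| ≤ (n:ℤ) := sp_abs_le hw (by rw [abs_of_pos (by omega)]; omega)
      have habs := abs_le.mp hvb2
      rw [hgfix (w x.2) hv1 hv2 hv3 hv4]
      exact (hinv (w x.1) (w x.2) (hspecval x.1 hs1) hvz habs.1 habs.2 hv1 hv2 hv3 hv4).1
    · push_neg at hs1
      obtain ⟨hv1, hv2, hv3, hv4⟩ := hnotspec x.1 h11 h12 hs1.1 hs1.2
      have hvz : w x.1 ≠ 0 := sp_ne_zero hw (by omega)
      have hvb2 : |w x.1| ≤ (n:ℤ) := sp_abs_le hw (by rw [abs_of_pos (by omega)]; omega)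
      have habs := abs_le.mp hvb2
      rw [hgfix (w x.1) hv1 hv2 hv3 hv4]
      exact (hinv (w x.2) (w x.1) (hspecval x.2 hs2) hvz habs.1 habs.2 hv1 hv2 hv3 hv4).2
    · push_neg at hs1; push_neg at hs2
      obtain ⟨hv1, hv2, hv3, hv4⟩ := hnotspec x.1 h11 h12 hs1.1 hs1.2
      obtain ⟨hu1, hu2, hu3, hu4⟩ := hnotspec x.2 h21 h22 hs2.1 hs2.2
      rw [hgfix (w x.1) hv1 hv2 hv3 hv4, hgfix (w x.2) hu1 hu2 hu3 hu4]
  have e1 : MStat n (g * w) =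
      (∑ x ∈ (pairsD n).erase (p, q), fpair (w x.1) (w x.2)) + fpair (g (w p)) (g (w q)) := by
    unfold MStat
    simp only [Equiv.Perm.mul_apply]
    rw [← Finset.sum_erase_add _ _ hs]
    congr 1
    exact Finset.sum_congr rfl key
  have e2 : MStat n w =
      (∑ x ∈ (pairsD n).erase (p, q), fpair (w x.1) (w x.2)) + fpair (w p) (w q) := by
    unfold MStat
    rw [← Finset.sum_erase_add _ _ hs]
  omega

/-- The left-descent criterion for generator `r`. -/
def CritD (n r : ℕ) (w : Perm ℤ) : Prop :=
  if r = n then dkey n (w⁻¹ ((n:ℤ)-1)) < dkey n (w⁻¹ (-(n:ℤ)))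
  else dkey n (w⁻¹ (r:ℤ)) < dkey n (w⁻¹ ((r:ℤ)+1))

lemma delta_n {n : ℕ} {w : Perm ℤ} (hn : 2 ≤ n) (hw : IsSignedPerm n w) :
    (CritD n n w → MStat n (sgen n n * w) = MStat n w + 1) ∧
    (¬ CritD n n w → MStat n w = MStat n (sgen n n * w) + 1) := by
  have hwinv := sp_inv hw
  have hg1 : sgen n n ((n:ℤ)-1) = -(n:ℤ) := by
    rw [sgen_n_apply hn]; split_ifs <;> omega
  have hg2 : sgen n n (n:ℤ) = -((n:ℤ)-1) := by
    rw [sgen_n_apply hn]; split_ifs <;> omega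
  have hg3 : sgen n n (-((n:ℤ)-1)) = (n:ℤ) := by
    rw [sgen_n_apply hn]; split_ifs <;> omega
  have hg4 : sgen n n (-(n:ℤ)) = (n:ℤ)-1 := by
    rw [sgen_n_apply hn]; split_ifs <;> omega
  have hgfix : ∀ v : ℤ, v ≠ (n:ℤ)-1 → v ≠ -((n:ℤ)-1) → v ≠ (n:ℤ) → v ≠ -(n:ℤ) →
      sgen n n v = v := by
    intro v e1 e2 e3 e4; rw [sgen_n_apply hn]; split_ifs <;> omega
  have hinv : ∀ u v : ℤ, (u = (n:ℤ)-1 ∨ u = -((n:ℤ)-1) ∨ u = (n:ℤ) ∨ u = -(n:ℤ)) →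
      v ≠ 0 → -(n:ℤ) ≤ v → v ≤ (n:ℤ) → v ≠ (n:ℤ)-1 → v ≠ -((n:ℤ)-1) → v ≠ (n:ℤ) → v ≠ -(n:ℤ) →
      fpair (sgen n n u) v = fpair u v ∧ fpair v (sgen n n u) = fpair v u := by
    intro u v hu hv0 hvl hvr e1 e2 e3 e4
    rcases lt_or_gt_of_ne hv0 with hv | hv
    · rcases hu with rfl | rfl | rfl | rfl
      · rw [hg1]
        constructor
        · rw [fpair_nn (by omega) hv, fpair_pn (by omega) hv]; split_ifs <;> omega
        · rw [fpair_nn hv (by omega), fpair_np hv (by omega)]; split_ifs <;> omega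
      · rw [hg3]
        constructor
        · rw [fpair_pn (by omega) hv, fpair_nn (by omega) hv]; split_ifs <;> omega
        · rw [fpair_np hv (by omega), fpair_nn hv (by omega)]; split_ifs <;> omega
      · rw [hg2]
        constructor
        · rw [fpair_nn (by omega) hv, fpair_pn (by omega) hv]; split_ifs <;> omega
        · rw [fpair_nn hv (by omega), fpair_np hv (by omega)]; split_ifs <;> omega
      · rw [hg4]
        constructor
        · rw [fpair_pn (by omega) hv, fpair_nn (by omega) hv]; split_ifs <;> omega
        · rw [fpair_np hv (by omega), fpair_nn hv (by omega)]; split_ifs <;> omega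
    · rcases hu with rfl | rfl | rfl | rfl
      · rw [hg1]
        constructor
        · rw [fpair_np (by omega) hv, fpair_pp (by omega) hv]; split_ifs <;> omega
        · rw [fpair_pn hv (by omega), fpair_pp hv (by omega)]; split_ifs <;> omega
      · rw [hg3]
        constructor
        · rw [fpair_pp (by omega) hv, fpair_np (by omega) hv]; split_ifs <;> omega
        · rw [fpair_pp hv (by omega), fpair_pn hv (by omega)]; split_ifs <;> omega
      · rw [hg2]
        constructor
        · rw [fpair_np (by omega) hv, fpair_pp (by omega) hv]; split_ifs <;> omega
        · rw [fpair_pn hv (by omega), fpair_pp hv (by omega)]; split_ifs <;> omega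
      · rw [hg4]
        constructor
        · rw [fpair_pp (by omega) hv, fpair_np (by omega) hv]; split_ifs <;> omega
        · rw [fpair_pp hv (by omega), fpair_pn hv (by omega)]; split_ifs <;> omega
  have hc10 : (n:ℤ)-1 ≠ 0 := by omega
  have hc20 : (n:ℤ) ≠ 0 := by omega
  have hx1 : |w⁻¹ ((n:ℤ)-1)| ≤ (n:ℤ) := sp_abs_le hwinv (by rw [abs_of_pos (by omega)]; omega)
  have hx2 : |w⁻¹ (n:ℤ)| ≤ (n:ℤ) := sp_abs_le hwinv (by rw [abs_of_pos (by omega)])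
  have hx10 : w⁻¹ ((n:ℤ)-1) ≠ 0 := sp_ne_zero hwinv hc10
  have hx20 : w⁻¹ (n:ℤ) ≠ 0 := sp_ne_zero hwinv hc20
  set a := |w⁻¹ ((n:ℤ)-1)| with hadef
  set b := |w⁻¹ (n:ℤ)| with hbdef
  set p := min a b with hpdef
  set q := max a b with hqdef
  have keyEq := master hw (sgen n n) (by omega : 1 ≤ (n:ℤ)-1) (by omega : (n:ℤ)-1 < (n:ℤ))
    (le_refl (n:ℤ)) hgfix hinv hpdef hqdef
  have ha1 : 1 ≤ a := by rcases abs_cases (w⁻¹ ((n:ℤ)-1)) with ⟨e1,e2⟩|⟨e1,e2⟩ <;> omega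
  have hb1 : 1 ≤ b := by rcases abs_cases (w⁻¹ (n:ℤ)) with ⟨e1,e2⟩|⟨e1,e2⟩ <;> omega
  have hva := val_at_pos hw ((n:ℤ)-1)
  have hvb := val_at_pos hw (n:ℤ)
  rw [← hadef] at hva
  rw [← hbdef] at hvb
  have hab : a ≠ b := by
    intro he
    rw [he] at hva
    rcases hva with h | h <;> rcases hvb with h' | h' <;> rw [h] at h' <;> omega
  have hneg : w⁻¹ (-(n:ℤ)) = -(w⁻¹ (n:ℤ)) := hwinv.1 (n:ℤ)
  simp only [CritD, if_pos rfl, ite_true]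
  rcases hva with hva | hva <;> rcases hvb with hvb | hvb <;>
    rcases lt_or_gt_of_ne hab with hab' | hab'
  -- case (+,+), a < b
  · have hp' : p = a := by omega
    have hq' : q = b := by omega
    have hi1 : w⁻¹ ((n:ℤ)-1) = a := by rw [Equiv.Perm.inv_eq_iff_eq]; exact hva.symm
    have hi2 : w⁻¹ (n:ℤ) = b := by rw [Equiv.Perm.inv_eq_iff_eq]; exact hvb.symm
    have hd2 : dkey n (w⁻¹ (-(n:ℤ))) = 2*n+1-b := by rw [hneg, hi2, dkey_neg' hb1 hx2]
    rw [hi1, dkey_pos' ha1 hx1, hd2]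
    have hf1 : fpair (w p) (w q) = 0 := by
      rw [hp', hq', hva, hvb, fpair_pp (by omega) (by omega)]; split_ifs <;> omega
    have hf2 : fpair (sgen n n (w p)) (sgen n n (w q)) = 1 := by
      rw [hp', hq', hva, hvb, hg1, hg2, fpair_nn (by omega) (by omega)]; split_ifs <;> omega
    rw [hf1, hf2] at keyEq
    constructor <;> intro hC <;> omega
  -- case (+,+), b < a
  · have hp' : p = b := by omega
    have hq' : q = a := by omega
    have hi1 : w⁻¹ ((n:ℤ)-1) = a := by rw [Equiv.Perm.inv_eq_iff_eq]; exact hva.symm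
    have hi2 : w⁻¹ (n:ℤ) = b := by rw [Equiv.Perm.inv_eq_iff_eq]; exact hvb.symm
    have hd2 : dkey n (w⁻¹ (-(n:ℤ))) = 2*n+1-b := by rw [hneg, hi2, dkey_neg' hb1 hx2]
    rw [hi1, dkey_pos' ha1 hx1, hd2]
    have hf1 : fpair (w p) (w q) = 1 := by
      rw [hp', hq', hva, hvb, fpair_pp (by omega) (by omega)]; split_ifs <;> omega
    have hf2 : fpair (sgen n n (w p)) (sgen n n (w q)) = 2 := by
      rw [hp', hq', hva, hvb, hg1, hg2, fpair_nn (by omega) (by omega)]; split_ifs <;> omega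
    rw [hf1, hf2] at keyEq
    constructor <;> intro hC <;> omega
  -- case (+,-) : w a = n-1, w b = -n ; a < b
  · have hp' : p = a := by omega
    have hq' : q = b := by omega
    have hi1 : w⁻¹ ((n:ℤ)-1) = a := by rw [Equiv.Perm.inv_eq_iff_eq]; exact hva.symm
    have hi2 : w⁻¹ (n:ℤ) = -b := by
      rw [Equiv.Perm.inv_eq_iff_eq, hw.1, hvb]; omega
    have hd2 : dkey n (w⁻¹ (-(n:ℤ))) = b := by
      rw [hneg, hi2, neg_neg, dkey_pos' hb1 (by omega)]
    rw [hi1, dkey_pos' ha1 hx1, hd2]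
    have hf1 : fpair (w p) (w q) = 0 := by
      rw [hp', hq', hva, hvb, fpair_pn (by omega) (by omega)]; split_ifs <;> omega
    have hf2 : fpair (sgen n n (w p)) (sgen n n (w q)) = 1 := by
      rw [hp', hq', hva, hvb, hg1, hg4, fpair_np (by omega) (by omega)]; split_ifs <;> omega
    rw [hf1, hf2] at keyEq
    constructor <;> intro hC <;> omega
  -- case (+,-) : b < a
  · have hp' : p = b := by omega
    have hq' : q = a := by omega
    have hi1 : w⁻¹ ((n:ℤ)-1) = a := by rw [Equiv.Perm.inv_eq_iff_eq]; exact hva.symm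
    have hi2 : w⁻¹ (n:ℤ) = -b := by
      rw [Equiv.Perm.inv_eq_iff_eq, hw.1, hvb]; omega
    have hd2 : dkey n (w⁻¹ (-(n:ℤ))) = b := by
      rw [hneg, hi2, neg_neg, dkey_pos' hb1 (by omega)]
    rw [hi1, dkey_pos' ha1 hx1, hd2]
    have hf1 : fpair (w p) (w q) = 1 := by
      rw [hp', hq', hva, hvb, fpair_np (by omega) (by omega)]; split_ifs <;> omega
    have hf2 : fpair (sgen n n (w p)) (sgen n n (w q)) = 0 := by
      rw [hp', hq', hva, hvb, hg1, hg4, fpair_pn (by omega) (by omega)]; split_ifs <;> omega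
    rw [hf1, hf2] at keyEq
    constructor <;> intro hC <;> omega
  -- case (-,+) : w a = -(n-1), w b = n ; a < b
  · have hp' : p = a := by omega
    have hq' : q = b := by omega
    have hi1 : w⁻¹ ((n:ℤ)-1) = -a := by
      rw [Equiv.Perm.inv_eq_iff_eq, hw.1, hva]; omega
    have hi2 : w⁻¹ (n:ℤ) = b := by rw [Equiv.Perm.inv_eq_iff_eq]; exact hvb.symm
    have hd1 : dkey n (w⁻¹ ((n:ℤ)-1)) = 2*n+1-a := by rw [hi1, dkey_neg' ha1 hx1]
    have hd2 : dkey n (w⁻¹ (-(n:ℤ))) = 2*n+1-b := by rw [hneg, hi2, dkey_neg' hb1 hx2]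
    rw [hd1, hd2]
    have hf1 : fpair (w p) (w q) = 2 := by
      rw [hp', hq', hva, hvb, fpair_np (by omega) (by omega)]; split_ifs <;> omega
    have hf2 : fpair (sgen n n (w p)) (sgen n n (w q)) = 1 := by
      rw [hp', hq', hva, hvb, hg3, hg2, fpair_pn (by omega) (by omega)]; split_ifs <;> omega
    rw [hf1, hf2] at keyEq
    constructor <;> intro hC <;> omega
  -- case (-,+) : b < a
  · have hp' : p = b := by omega
    have hq' : q = a := by omega
    have hi1 : w⁻¹ ((n:ℤ)-1) = -a := by
      rw [Equiv.Perm.inv_eq_iff_eq, hw.1, hva]; omega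
    have hi2 : w⁻¹ (n:ℤ) = b := by rw [Equiv.Perm.inv_eq_iff_eq]; exact hvb.symm
    have hd1 : dkey n (w⁻¹ ((n:ℤ)-1)) = 2*n+1-a := by rw [hi1, dkey_neg' ha1 hx1]
    have hd2 : dkey n (w⁻¹ (-(n:ℤ))) = 2*n+1-b := by rw [hneg, hi2, dkey_neg' hb1 hx2]
    rw [hd1, hd2]
    have hf1 : fpair (w p) (w q) = 1 := by
      rw [hp', hq', hva, hvb, fpair_pn (by omega) (by omega)]; split_ifs <;> omega
    have hf2 : fpair (sgen n n (w p)) (sgen n n (w q)) = 2 := by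
      rw [hp', hq', hva, hvb, hg3, hg2, fpair_np (by omega) (by omega)]; split_ifs <;> omega
    rw [hf1, hf2] at keyEq
    constructor <;> intro hC <;> omega
  -- case (-,-) : w a = -(n-1), w b = -n ; a < b
  · have hp' : p = a := by omega
    have hq' : q = b := by omega
    have hi1 : w⁻¹ ((n:ℤ)-1) = -a := by
      rw [Equiv.Perm.inv_eq_iff_eq, hw.1, hva]; omega
    have hi2 : w⁻¹ (n:ℤ) = -b := by
      rw [Equiv.Perm.inv_eq_iff_eq, hw.1, hvb]; omega
    have hd1 : dkey n (w⁻¹ ((n:ℤ)-1)) = 2*n+1-a := by rw [hi1, dkey_neg' ha1 hx1]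
    have hd2 : dkey n (w⁻¹ (-(n:ℤ))) = b := by
      rw [hneg, hi2, neg_neg, dkey_pos' hb1 (by omega)]
    rw [hd1, hd2]
    have hf1 : fpair (w p) (w q) = 2 := by
      rw [hp', hq', hva, hvb, fpair_nn (by omega) (by omega)]; split_ifs <;> omega
    have hf2 : fpair (sgen n n (w p)) (sgen n n (w q)) = 1 := by
      rw [hp', hq', hva, hvb, hg3, hg4, fpair_pp (by omega) (by omega)]; split_ifs <;> omega
    rw [hf1, hf2] at keyEq
    constructor <;> intro hC <;> omega
  -- case (-,-) : b < a
  · have hp' : p = b := by omega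
    have hq' : q = a := by omega
    have hi1 : w⁻¹ ((n:ℤ)-1) = -a := by
      rw [Equiv.Perm.inv_eq_iff_eq, hw.1, hva]; omega
    have hi2 : w⁻¹ (n:ℤ) = -b := by
      rw [Equiv.Perm.inv_eq_iff_eq, hw.1, hvb]; omega
    have hd1 : dkey n (w⁻¹ ((n:ℤ)-1)) = 2*n+1-a := by rw [hi1, dkey_neg' ha1 hx1]
    have hd2 : dkey n (w⁻¹ (-(n:ℤ))) = b := by
      rw [hneg, hi2, neg_neg, dkey_pos' hb1 (by omega)]
    rw [hd1, hd2]
    have hf1 : fpair (w p) (w q) = 1 := by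
      rw [hp', hq', hva, hvb, fpair_nn (by omega) (by omega)]; split_ifs <;> omega
    have hf2 : fpair (sgen n n (w p)) (sgen n n (w q)) = 0 := by
      rw [hp', hq', hva, hvb, hg4, hg3, fpair_pp (by omega) (by omega)]; split_ifs <;> omega
    rw [hf1, hf2] at keyEq
    constructor <;> intro hC <;> omega

lemma delta_lt {n : ℕ} {w : Perm ℤ} (hn : 2 ≤ n) {r : ℕ} (h1 : 1 ≤ r) (hlt : r < n)
    (hw : IsSignedPerm n w) :
    (CritD n r w → MStat n (sgen n r * w) = MStat n w + 1) ∧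
    (¬ CritD n r w → MStat n w = MStat n (sgen n r * w) + 1) := by
  have hwinv := sp_inv hw
  have hg1 : sgen n r (r:ℤ) = (r:ℤ)+1 := by
    rw [sgen_lt_apply h1 hlt]; split_ifs <;> omega
  have hg2 : sgen n r ((r:ℤ)+1) = (r:ℤ) := by
    rw [sgen_lt_apply h1 hlt]; split_ifs <;> omega
  have hg3 : sgen n r (-(r:ℤ)) = -((r:ℤ)+1) := by
    rw [sgen_lt_apply h1 hlt]; split_ifs <;> omega
  have hg4 : sgen n r (-((r:ℤ)+1)) = -(r:ℤ) := by
    rw [sgen_lt_apply h1 hlt]; split_ifs <;> omega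
  have hgfix : ∀ v : ℤ, v ≠ (r:ℤ) → v ≠ -(r:ℤ) → v ≠ (r:ℤ)+1 → v ≠ -((r:ℤ)+1) →
      sgen n r v = v := by
    intro v e1 e2 e3 e4; rw [sgen_lt_apply h1 hlt]; split_ifs <;> omega
  have hinv : ∀ u v : ℤ, (u = (r:ℤ) ∨ u = -(r:ℤ) ∨ u = (r:ℤ)+1 ∨ u = -((r:ℤ)+1)) →
      v ≠ 0 → -(n:ℤ) ≤ v → v ≤ (n:ℤ) → v ≠ (r:ℤ) → v ≠ -(r:ℤ) → v ≠ (r:ℤ)+1 → v ≠ -((r:ℤ)+1) →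
      fpair (sgen n r u) v = fpair u v ∧ fpair v (sgen n r u) = fpair v u := by
    intro u v hu hv0 hvl hvr e1 e2 e3 e4
    rcases hu with rfl | rfl | rfl | rfl
    · rw [hg1]
      exact ⟨fpair_congr_left (by omega) (by omega) (by omega) (by omega),
        fpair_congr_right (by omega) (by omega) (by omega) (by omega)⟩
    · rw [hg3]
      exact ⟨fpair_congr_left (by omega) (by omega) (by omega) (by omega),
        fpair_congr_right (by omega) (by omega) (by omega) (by omega)⟩
    · rw [hg2]
      exact ⟨fpair_congr_left (by omega) (by omega) (by omega) (by omega),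
        fpair_congr_right (by omega) (by omega) (by omega) (by omega)⟩
    · rw [hg4]
      exact ⟨fpair_congr_left (by omega) (by omega) (by omega) (by omega),
        fpair_congr_right (by omega) (by omega) (by omega) (by omega)⟩
  have hc10 : (r:ℤ) ≠ 0 := by omega
  have hc20 : (r:ℤ)+1 ≠ 0 := by omega
  have hx1 : |w⁻¹ (r:ℤ)| ≤ (n:ℤ) := sp_abs_le hwinv (by rw [abs_of_pos (by omega)]; omega)
  have hx2 : |w⁻¹ ((r:ℤ)+1)| ≤ (n:ℤ) := sp_abs_le hwinv (by rw [abs_of_pos (by omega)]; omega)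
  have hx10 : w⁻¹ (r:ℤ) ≠ 0 := sp_ne_zero hwinv hc10
  have hx20 : w⁻¹ ((r:ℤ)+1) ≠ 0 := sp_ne_zero hwinv hc20
  set a := |w⁻¹ (r:ℤ)| with hadef
  set b := |w⁻¹ ((r:ℤ)+1)| with hbdef
  set p := min a b with hpdef
  set q := max a b with hqdef
  have keyEq := master hw (sgen n r) (by omega : 1 ≤ (r:ℤ)) (by omega : (r:ℤ) < (r:ℤ)+1)
    (by omega : (r:ℤ)+1 ≤ (n:ℤ)) hgfix hinv hpdef hqdef
  have ha1 : 1 ≤ a := by rcases abs_cases (w⁻¹ (r:ℤ)) with ⟨e1,e2⟩|⟨e1,e2⟩ <;> omega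
  have hb1 : 1 ≤ b := by rcases abs_cases (w⁻¹ ((r:ℤ)+1)) with ⟨e1,e2⟩|⟨e1,e2⟩ <;> omega
  have hva := val_at_pos hw (r:ℤ)
  have hvb := val_at_pos hw ((r:ℤ)+1)
  rw [← hadef] at hva
  rw [← hbdef] at hvb
  have hab : a ≠ b := by
    intro he
    rw [he] at hva
    rcases hva with h | h <;> rcases hvb with h' | h' <;> rw [h] at h' <;> omega
  have hrn : r ≠ n := by omega
  simp only [CritD, if_neg hrn]
  rcases hva with hva | hva <;> rcases hvb with hvb | hvb <;>
    rcases lt_or_gt_of_ne hab with hab' | hab'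
  -- case (+,+), a < b
  · have hp' : p = a := by omega
    have hq' : q = b := by omega
    have hi1 : w⁻¹ (r:ℤ) = a := by rw [Equiv.Perm.inv_eq_iff_eq]; exact hva.symm
    have hi2 : w⁻¹ ((r:ℤ)+1) = b := by rw [Equiv.Perm.inv_eq_iff_eq]; exact hvb.symm
    rw [hi1, hi2, dkey_pos' ha1 hx1, dkey_pos' hb1 hx2]
    have hf1 : fpair (w p) (w q) = 0 := by
      rw [hp', hq', hva, hvb, fpair_pp (by omega) (by omega)]; split_ifs <;> omega
    have hf2 : fpair (sgen n r (w p)) (sgen n r (w q)) = 1 := by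
      rw [hp', hq', hva, hvb, hg1, hg2, fpair_pp (by omega) (by omega)]; split_ifs <;> omega
    rw [hf1, hf2] at keyEq
    constructor <;> intro hC <;> omega
  -- case (+,+), b < a
  · have hp' : p = b := by omega
    have hq' : q = a := by omega
    have hi1 : w⁻¹ (r:ℤ) = a := by rw [Equiv.Perm.inv_eq_iff_eq]; exact hva.symm
    have hi2 : w⁻¹ ((r:ℤ)+1) = b := by rw [Equiv.Perm.inv_eq_iff_eq]; exact hvb.symm
    rw [hi1, hi2, dkey_pos' ha1 hx1, dkey_pos' hb1 hx2]
    have hf1 : fpair (w p) (w q) = 1 := by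
      rw [hp', hq', hvb, hva, fpair_pp (by omega) (by omega)]; split_ifs <;> omega
    have hf2 : fpair (sgen n r (w p)) (sgen n r (w q)) = 0 := by
      rw [hp', hq', hvb, hva, hg2, hg1, fpair_pp (by omega) (by omega)]; split_ifs <;> omega
    rw [hf1, hf2] at keyEq
    constructor <;> intro hC <;> omega
  -- case (+,-), a < b : values (r, -(r+1))
  · have hp' : p = a := by omega
    have hq' : q = b := by omega
    have hi1 : w⁻¹ (r:ℤ) = a := by rw [Equiv.Perm.inv_eq_iff_eq]; exact hva.symm
    have hi2 : w⁻¹ ((r:ℤ)+1) = -b := by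
      rw [Equiv.Perm.inv_eq_iff_eq, hw.1, hvb]; omega
    rw [hi1, hi2, dkey_pos' ha1 hx1, dkey_neg' hb1 (by omega)]
    have hf1 : fpair (w p) (w q) = 0 := by
      rw [hp', hq', hva, hvb, fpair_pn (by omega) (by omega)]; split_ifs <;> omega
    have hf2 : fpair (sgen n r (w p)) (sgen n r (w q)) = 1 := by
      rw [hp', hq', hva, hvb, hg1, hg4, fpair_pn (by omega) (by omega)]; split_ifs <;> omega
    rw [hf1, hf2] at keyEq
    constructor <;> intro hC <;> omega
  -- case (+,-), b < a : values (-(r+1), r)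
  · have hp' : p = b := by omega
    have hq' : q = a := by omega
    have hi1 : w⁻¹ (r:ℤ) = a := by rw [Equiv.Perm.inv_eq_iff_eq]; exact hva.symm
    have hi2 : w⁻¹ ((r:ℤ)+1) = -b := by
      rw [Equiv.Perm.inv_eq_iff_eq, hw.1, hvb]; omega
    rw [hi1, hi2, dkey_pos' ha1 hx1, dkey_neg' hb1 (by omega)]
    have hf1 : fpair (w p) (w q) = 1 := by
      rw [hp', hq', hvb, hva, fpair_np (by omega) (by omega)]; split_ifs <;> omega
    have hf2 : fpair (sgen n r (w p)) (sgen n r (w q)) = 2 := by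
      rw [hp', hq', hvb, hva, hg4, hg1, fpair_np (by omega) (by omega)]; split_ifs <;> omega
    rw [hf1, hf2] at keyEq
    constructor <;> intro hC <;> omega
  -- case (-,+), a < b : values (-r, r+1)
  · have hp' : p = a := by omega
    have hq' : q = b := by omega
    have hi1 : w⁻¹ (r:ℤ) = -a := by
      rw [Equiv.Perm.inv_eq_iff_eq, hw.1, hva]; omega
    have hi2 : w⁻¹ ((r:ℤ)+1) = b := by rw [Equiv.Perm.inv_eq_iff_eq]; exact hvb.symm
    rw [hi1, hi2, dkey_neg' ha1 (by omega), dkey_pos' hb1 hx2]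
    have hf1 : fpair (w p) (w q) = 2 := by
      rw [hp', hq', hva, hvb, fpair_np (by omega) (by omega)]; split_ifs <;> omega
    have hf2 : fpair (sgen n r (w p)) (sgen n r (w q)) = 1 := by
      rw [hp', hq', hva, hvb, hg3, hg2, fpair_np (by omega) (by omega)]; split_ifs <;> omega
    rw [hf1, hf2] at keyEq
    constructor <;> intro hC <;> omega
  -- case (-,+), b < a : values (r+1, -r)
  · have hp' : p = b := by omega
    have hq' : q = a := by omega
    have hi1 : w⁻¹ (r:ℤ) = -a := by
      rw [Equiv.Perm.inv_eq_iff_eq, hw.1, hva]; omega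
    have hi2 : w⁻¹ ((r:ℤ)+1) = b := by rw [Equiv.Perm.inv_eq_iff_eq]; exact hvb.symm
    rw [hi1, hi2, dkey_neg' ha1 (by omega), dkey_pos' hb1 hx2]
    have hf1 : fpair (w p) (w q) = 1 := by
      rw [hp', hq', hvb, hva, fpair_pn (by omega) (by omega)]; split_ifs <;> omega
    have hf2 : fpair (sgen n r (w p)) (sgen n r (w q)) = 0 := by
      rw [hp', hq', hvb, hva, hg2, hg3, fpair_pn (by omega) (by omega)]; split_ifs <;> omega
    rw [hf1, hf2] at keyEq
    constructor <;> intro hC <;> omega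
  -- case (-,-), a < b : values (-r, -(r+1))
  · have hp' : p = a := by omega
    have hq' : q = b := by omega
    have hi1 : w⁻¹ (r:ℤ) = -a := by
      rw [Equiv.Perm.inv_eq_iff_eq, hw.1, hva]; omega
    have hi2 : w⁻¹ ((r:ℤ)+1) = -b := by
      rw [Equiv.Perm.inv_eq_iff_eq, hw.1, hvb]; omega
    rw [hi1, hi2, dkey_neg' ha1 (by omega), dkey_neg' hb1 (by omega)]
    have hf1 : fpair (w p) (w q) = 2 := by
      rw [hp', hq', hva, hvb, fpair_nn (by omega) (by omega)]; split_ifs <;> omega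
    have hf2 : fpair (sgen n r (w p)) (sgen n r (w q)) = 1 := by
      rw [hp', hq', hva, hvb, hg3, hg4, fpair_nn (by omega) (by omega)]; split_ifs <;> omega
    rw [hf1, hf2] at keyEq
    constructor <;> intro hC <;> omega
  -- case (-,-), b < a : values (-(r+1), -r)
  · have hp' : p = b := by omega
    have hq' : q = a := by omega
    have hi1 : w⁻¹ (r:ℤ) = -a := by
      rw [Equiv.Perm.inv_eq_iff_eq, hw.1, hva]; omega
    have hi2 : w⁻¹ ((r:ℤ)+1) = -b := by
      rw [Equiv.Perm.inv_eq_iff_eq, hw.1, hvb]; omega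
    rw [hi1, hi2, dkey_neg' ha1 (by omega), dkey_neg' hb1 (by omega)]
    have hf1 : fpair (w p) (w q) = 1 := by
      rw [hp', hq', hvb, hva, fpair_nn (by omega) (by omega)]; split_ifs <;> omega
    have hf2 : fpair (sgen n r (w p)) (sgen n r (w q)) = 2 := by
      rw [hp', hq', hvb, hva, hg4, hg3, fpair_nn (by omega) (by omega)]; split_ifs <;> omega
    rw [hf1, hf2] at keyEq
    constructor <;> intro hC <;> omega

lemma deltaD {n : ℕ} {w : Perm ℤ} (hn : 2 ≤ n) {r : ℕ} (h1 : 1 ≤ r) (h2 : r ≤ n)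
    (hw : IsSignedPerm n w) :
    (CritD n r w → MStat n (sgen n r * w) = MStat n w + 1) ∧
    (¬ CritD n r w → MStat n w = MStat n (sgen n r * w) + 1) := by
  rcases eq_or_lt_of_le h2 with he | hlt
  · subst he; exact delta_n hn hw
  · exact delta_lt hn h1 hlt hw

lemma wordProd_nil {n : ℕ} : wordProd n [] = 1 := rfl

lemma wordProd_cons {n : ℕ} {r : ℕ} {l : List ℕ} :
    wordProd n (r :: l) = sgen n r * wordProd n l := by
  simp [wordProd]

lemma even_mul_sgen {n r : ℕ} {w : Perm ℤ} (hn : 2 ≤ n) (h1 : 1 ≤ r) (h2 : r ≤ n)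
    (hw : IsEvenSignedPerm n w) : IsEvenSignedPerm n (sgen n r * w) := by
  obtain ⟨hsw, heven⟩ := hw
  refine ⟨sp_mul (sgen_signed hn h1 h2) hsw, ?_⟩
  rcases eq_or_lt_of_le h2 with he | hlt
  · -- r = n : two positions flip sign
    subst he
    have hwinv := sp_inv hsw
    have hx1 : |w⁻¹ ((r:ℤ)-1)| ≤ (r:ℤ) := sp_abs_le hwinv (by rw [abs_of_pos (by omega)]; omega)
    have hx2 : |w⁻¹ (r:ℤ)| ≤ (r:ℤ) := sp_abs_le hwinv (by rw [abs_of_pos (by omega)])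
    have hx10 : w⁻¹ ((r:ℤ)-1) ≠ 0 := sp_ne_zero hwinv (by omega)
    have hx20 : w⁻¹ (r:ℤ) ≠ 0 := sp_ne_zero hwinv (by omega)
    set a := |w⁻¹ ((r:ℤ)-1)| with hadef
    set b := |w⁻¹ (r:ℤ)| with hbdef
    have ha1 : 1 ≤ a := by rcases abs_cases (w⁻¹ ((r:ℤ)-1)) with ⟨e1,e2⟩|⟨e1,e2⟩ <;> omega
    have hb1 : 1 ≤ b := by rcases abs_cases (w⁻¹ (r:ℤ)) with ⟨e1,e2⟩|⟨e1,e2⟩ <;> omega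
    have hva := val_at_pos hsw ((r:ℤ)-1)
    have hvb := val_at_pos hsw (r:ℤ)
    rw [← hadef] at hva
    rw [← hbdef] at hvb
    have hab : a ≠ b := by
      intro he
      rw [he] at hva
      rcases hva with h | h <;> rcases hvb with h' | h' <;> rw [h] at h' <;> omega
    have hnotspec : ∀ i : ℤ, 0 < i → i ≠ a → i ≠ b →
        w i ≠ (r:ℤ)-1 ∧ w i ≠ -((r:ℤ)-1) ∧ w i ≠ (r:ℤ) ∧ w i ≠ -(r:ℤ) := by
      intro i hipos hia hib
      refine ⟨?_, ?_, ?_, ?_⟩ <;> intro hv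
      · have := pos_unique hsw (Or.inl hv); rw [← hadef, abs_of_pos hipos] at this; omega
      · have := pos_unique hsw (Or.inr hv); rw [← hadef, abs_of_pos hipos] at this; omega
      · have := pos_unique hsw (Or.inl hv); rw [← hbdef, abs_of_pos hipos] at this; omega
      · have := pos_unique hsw (Or.inr hv); rw [← hbdef, abs_of_pos hipos] at this; omega
    have key : ∀ i : ℤ, 0 < i → i ≠ a → i ≠ b → ((sgen r r * w) i < 0 ↔ w i < 0) := by
      intro i hipos hia hib
      obtain ⟨e1, e2, e3, e4⟩ := hnotspec i hipos hia hib
      rw [Equiv.Perm.mul_apply, sgen_n_apply hn]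
      split_ifs <;> omega
    have keya : (sgen r r * w) a < 0 ↔ ¬ (w a < 0) := by
      rw [Equiv.Perm.mul_apply, sgen_n_apply hn]
      rcases hva with h | h <;> rw [h] <;> split_ifs <;> omega
    have keyb : (sgen r r * w) b < 0 ↔ ¬ (w b < 0) := by
      rw [Equiv.Perm.mul_apply, sgen_n_apply hn]
      rcases hvb with h | h <;> rw [h] <;> split_ifs <;> omega
    -- sums
    have hamem : a ∈ Finset.Icc (1:ℤ) (r:ℤ) := by rw [Finset.mem_Icc]; omega
    have hbmem : b ∈ (Finset.Icc (1:ℤ) (r:ℤ)).erase a := by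
      rw [Finset.mem_erase, Finset.mem_Icc]; exact ⟨fun h => hab h.symm, by omega⟩
    have expand : ∀ g : Perm ℤ, ((Finset.Icc (1:ℤ) (r:ℤ)).filter (fun i => g i < 0)).card =
        (∑ i ∈ ((Finset.Icc (1:ℤ) (r:ℤ)).erase a).erase b, if g i < 0 then 1 else 0) +
        (if g b < 0 then 1 else 0) + (if g a < 0 then 1 else 0) := by
      intro g
      rw [Finset.card_filter]
      rw [← Finset.sum_erase_add _ _ hamem, ← Finset.sum_erase_add _ _ hbmem]
    have hcongr : (∑ i ∈ ((Finset.Icc (1:ℤ) (r:ℤ)).erase a).erase b,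
          if (sgen r r * w) i < 0 then 1 else 0) =
        ∑ i ∈ ((Finset.Icc (1:ℤ) (r:ℤ)).erase a).erase b, if w i < 0 then 1 else 0 := by
      apply Finset.sum_congr rfl
      intro i hi
      have hib := Finset.ne_of_mem_erase hi
      have hia := Finset.ne_of_mem_erase (Finset.mem_of_mem_erase hi)
      have hiIcc := Finset.mem_of_mem_erase (Finset.mem_of_mem_erase hi)
      rw [Finset.mem_Icc] at hiIcc
      have := key i (by omega) hia hib
      split_ifs <;> omega
    have e1 := expand (sgen r r * w)
    have e2 := expand w
    rw [hcongr] at e1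
    rw [Nat.even_iff] at heven ⊢
    have hfa : (if (sgen r r * w) a < 0 then 1 else 0) + (if w a < 0 then 1 else 0) = 1 := by
      split_ifs <;> omega
    have hfb : (if (sgen r r * w) b < 0 then 1 else 0) + (if w b < 0 then 1 else 0) = 1 := by
      split_ifs <;> omega
    omega
  · -- r < n : signs preserved
    have : (Finset.Icc (1:ℤ) (n:ℤ)).filter (fun i => (sgen n r * w) i < 0) =
        (Finset.Icc (1:ℤ) (n:ℤ)).filter (fun i => w i < 0) := by
      apply Finset.filter_congr
      intro i _
      rw [Equiv.Perm.mul_apply, sgen_lt_apply h1 hlt]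
      split_ifs <;> omega
    rw [this]
    exact heven

lemma dkey_eq_small {n : ℕ} {x : ℤ} (h0 : x ≠ 0) (hx : |x| ≤ (n:ℤ))
    (hk : dkey n x ≤ (n:ℤ)) : x = dkey n x := by
  rcases abs_cases x with ⟨e1,e2⟩|⟨e1,e2⟩ <;> (simp only [dkey] at *; split_ifs at * <;> omega)

lemma dkey_eq_np1 {n : ℕ} {x : ℤ} (h0 : x ≠ 0) (hx : |x| ≤ (n:ℤ))
    (hk : dkey n x = (n:ℤ)+1) : x = -(n:ℤ) := by
  rcases abs_cases x with ⟨e1,e2⟩|⟨e1,e2⟩ <;> (simp only [dkey] at *; split_ifs at * <;> omega)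

lemma exists_desc {n : ℕ} {w : Perm ℤ} (hn : 2 ≤ n) (hw : IsEvenSignedPerm n w)
    (hne : w ≠ 1) : ∃ r : ℕ, 1 ≤ r ∧ r ≤ n ∧ ¬ CritD n r w := by
  by_contra hcon
  push_neg at hcon
  have hsw := hw.1
  have hwinv := sp_inv hsw
  have hnz : ∀ r : ℕ, 1 ≤ r → r ≤ n → w⁻¹ ((r:ℤ)) ≠ 0 ∧ |w⁻¹ (r:ℤ)| ≤ (n:ℤ) := by
    intro r h1 h2
    exact ⟨sp_ne_zero hwinv (by positivity),
      sp_abs_le hwinv (by rw [abs_of_pos (by exact_mod_cast h1)]; exact_mod_cast h2)⟩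
  have hbnd : ∀ r : ℕ, 1 ≤ r → r ≤ n →
      1 ≤ dkey n (w⁻¹ (r:ℤ)) ∧ dkey n (w⁻¹ (r:ℤ)) ≤ 2*n := by
    intro r h1 h2
    exact dkey_bounds (hnz r h1 h2).1 (hnz r h1 h2).2
  have chain : ∀ r : ℕ, 1 ≤ r → r < n →
      dkey n (w⁻¹ (r:ℤ)) < dkey n (w⁻¹ ((r+1:ℕ):ℤ)) := by
    intro r h1 h2
    have hcr := hcon r h1 (le_of_lt h2)
    simp only [CritD, if_neg (by omega : r ≠ n)] at hcr
    have : ((r+1:ℕ):ℤ) = (r:ℤ)+1 := by push_cast; ring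
    rw [this]
    exact hcr
  have aux : ∀ d r : ℕ, 1 ≤ r → r + d ≤ n →
      dkey n (w⁻¹ (r:ℤ)) + d ≤ dkey n (w⁻¹ ((r+d:ℕ):ℤ)) := by
    intro d
    induction d with
    | zero => intro r h1 h2; simp
    | succ d ihd =>
      intro r h1 h2
      have h3 := ihd r h1 (by omega)
      have h4 := chain (r+d) (by omega) (by omega)
      have : ((r+(d+1):ℕ):ℤ) = ((r+d+1:ℕ):ℤ) := by push_cast; ring
      rw [this]
      push_cast at *
      omega
  have posr : ∀ r : ℕ, 1 ≤ r → r ≤ n → (r:ℤ) ≤ dkey n (w⁻¹ (r:ℤ)) := by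
    intro r h1 h2
    have := aux (r-1) 1 (by omega) (by omega)
    have he : (1+(r-1):ℕ) = r := by omega
    rw [he] at this
    have := hbnd 1 (by omega) (by omega)
    omega
  by_cases hle : dkey n (w⁻¹ ((n:ℕ):ℤ)) ≤ (n:ℤ)
  · -- w = 1, contradiction
    have hfix : ∀ r : ℕ, 1 ≤ r → r ≤ n → w⁻¹ ((r:ℤ)) = (r:ℤ) := by
      intro r h1 h2
      have hub := aux (n-r) r h1 (by omega)
      have he : (r+(n-r):ℕ) = n := by omega
      rw [he] at hub
      have hlb := posr r h1 h2
      have : dkey n (w⁻¹ (r:ℤ)) = (r:ℤ) := by omega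
      have hsmall := dkey_eq_small (hnz r h1 h2).1 (hnz r h1 h2).2 (by omega)
      omega
    apply hne
    rw [← inv_eq_one]
    apply Equiv.ext
    intro x
    simp only [Equiv.Perm.one_apply]
    by_cases hx0 : x = 0
    · rw [hx0]; exact sp_zero hwinv
    by_cases hbig : (n:ℤ) < |x|
    · exact hwinv.2 x hbig
    push_neg at hbig
    rcases lt_or_gt_of_ne hx0 with hneg | hpos
    · have hpx : 0 < -x := by omega
      have h1 : 1 ≤ (-x).toNat := by omega
      have h2 : (-x).toNat ≤ n := by
        rcases abs_cases x with ⟨e1,e2⟩|⟨e1,e2⟩ <;> omega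
      have := hfix (-x).toNat h1 h2
      rw [Int.toNat_of_nonneg (by omega)] at this
      have hx : w⁻¹ (-(-x)) = -(w⁻¹ (-x)) := hwinv.1 (-x)
      rw [neg_neg] at hx
      rw [hx, this]
      omega
    · have h1 : 1 ≤ x.toNat := by omega
      have h2 : x.toNat ≤ n := by
        rcases abs_cases x with ⟨e1,e2⟩|⟨e1,e2⟩ <;> omega
      have := hfix x.toNat h1 h2
      rw [Int.toNat_of_nonneg (by omega)] at this
      rw [this]
  · -- w is (1,...,n-1,-n) : odd, contradiction
    push_neg at hle
    have hcn := hcon n (by omega) le_rfl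
    simp only [CritD, if_pos rfl, ite_true] at hcn
    have hnegkey : dkey n (w⁻¹ (-(n:ℤ))) = 2*n+1 - dkey n (w⁻¹ ((n:ℕ):ℤ)) := by
      have : w⁻¹ (-(n:ℤ)) = -(w⁻¹ (n:ℤ)) := hwinv.1 (n:ℤ)
      rw [this]
      exact dkey_neg_eq (hnz n (by omega) le_rfl).1 (hnz n (by omega) le_rfl).2
    have hcast : ((n-1:ℕ):ℤ) = (n:ℤ)-1 := by omega
    rw [hnegkey] at hcn
    rw [← hcast] at hcn
    have hlbn1 := posr (n-1) (by omega) (by omega)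
    have hbn := hbnd n (by omega) le_rfl
    -- dkey (w⁻¹ n) = n+1 and dkey (w⁻¹ (n-1)) = n-1
    have hdn : dkey n (w⁻¹ ((n:ℕ):ℤ)) = (n:ℤ)+1 := by
      have := chain (n-1) (by omega) (by omega)
      have he : (n-1+1:ℕ) = n := by omega
      rw [he] at this
      omega
    have hinvn : w⁻¹ ((n:ℕ):ℤ) = -(n:ℤ) :=
      dkey_eq_np1 (hnz n (by omega) le_rfl).1 (hnz n (by omega) le_rfl).2 hdn
    have hfix : ∀ r : ℕ, 1 ≤ r → r ≤ n-1 → w⁻¹ ((r:ℤ)) = (r:ℤ) := by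
      intro r h1 h2
      have hub := aux (n-1-r) r h1 (by omega)
      have he : (r+(n-1-r):ℕ) = n-1 := by omega
      rw [he] at hub
      have hlb := posr r h1 (by omega)
      have hsmall := dkey_eq_small (hnz r h1 (by omega)).1 (hnz r h1 (by omega)).2 (by omega)
      omega
    have hwn : w ((n:ℕ):ℤ) = -(n:ℤ) := by
      have h5 : w (-(n:ℤ)) = (n:ℤ) := by
        rw [← hinvn, Equiv.Perm.apply_inv_self]
      have h6 := hsw.1 (-(n:ℤ))
      rw [neg_neg, h5] at h6
      omega
    have hA : (Finset.Icc (1:ℤ) (n:ℤ)).filter (fun i => w i < 0) = {(n:ℤ)} := by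
      apply Finset.ext
      intro i
      simp only [Finset.mem_filter, Finset.mem_Icc, Finset.mem_singleton]
      constructor
      · rintro ⟨⟨hi1, hi2⟩, hineg⟩
        by_contra hin
        have h1 : 1 ≤ i.toNat := by omega
        have h2 : i.toNat ≤ n-1 := by omega
        have := hfix i.toNat h1 h2
        rw [Int.toNat_of_nonneg (by omega)] at this
        have : w i = i := by
          conv_lhs => rw [← this]
          rw [Equiv.Perm.apply_inv_self]
        omega
      · rintro rfl
        refine ⟨⟨by omega, le_refl _⟩, ?_⟩
        push_cast at hwn
        omega
    have heven := hw.2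
    rw [hA, Finset.card_singleton] at heven
    rw [Nat.even_iff] at heven
    omega

lemma gen_upper {n : ℕ} (hn : 2 ≤ n) :
    ∀ k : ℕ, ∀ w : Perm ℤ, IsEvenSignedPerm n w → MStat n w = k →
    ∃ l : List ℕ, (∀ i ∈ l, 1 ≤ i ∧ i ≤ n) ∧ l.length = k ∧ wordProd n l = w := by
  intro k
  induction k using Nat.strong_induction_on with
  | _ k ih =>
    intro w hw hM
    by_cases h1 : w = 1
    · subst h1
      rw [MStat_one] at hM
      exact ⟨[], by simp, by simp [← hM], wordProd_nil⟩
    · obtain ⟨r, hr1, hr2, hC⟩ := exists_desc hn hw h1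
      have hd := (deltaD hn hr1 hr2 hw.1).2 hC
      obtain ⟨l, hl, hlen, hprod⟩ := ih (MStat n (sgen n r * w)) (by omega)
        (sgen n r * w) (even_mul_sgen hn hr1 hr2 hw) rfl
      refine ⟨r :: l, ?_, ?_, ?_⟩
      · intro i hi
        rcases List.mem_cons.mp hi with rfl | hi
        · exact ⟨hr1, hr2⟩
        · exact hl i hi
      · simp only [List.length_cons, hlen]; omega
      · rw [wordProd_cons, hprod, ← mul_assoc, sgen_sq hn hr1 hr2, one_mul]

lemma gen_lower {n : ℕ} (hn : 2 ≤ n) :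
    ∀ l : List ℕ, (∀ i ∈ l, 1 ≤ i ∧ i ≤ n) →
    IsSignedPerm n (wordProd n l) ∧ MStat n (wordProd n l) ≤ l.length := by
  intro l
  induction l with
  | nil =>
    intro _
    rw [wordProd_nil]
    exact ⟨sp_one, by rw [MStat_one]; simp⟩
  | cons r t iht =>
    intro hl
    have hr := hl r (List.mem_cons_self (a := r) (l := t))
    obtain ⟨hsp, hle⟩ := iht (fun i hi => hl i (List.mem_cons_of_mem r hi))
    rw [wordProd_cons]
    refine ⟨sp_mul (sgen_signed hn hr.1 hr.2) hsp, ?_⟩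
    have hd := deltaD hn hr.1 hr.2 hsp
    simp only [List.length_cons]
    by_cases hC : CritD n r (wordProd n t)
    · have := hd.1 hC; omega
    · have := hd.2 hC; omega

lemma dlength_eq {n : ℕ} {w : Perm ℤ} (hn : 2 ≤ n) (hw : IsEvenSignedPerm n w) :
    DLength n w = MStat n w := by
  obtain ⟨l, hl, hlen, hprod⟩ := gen_upper hn (MStat n w) w hw rfl
  apply le_antisymm
  · exact Nat.sInf_le ⟨l, hl, hlen, hprod⟩
  · apply le_csInf
    · exact ⟨MStat n w, ⟨l, hl, hlen, hprod⟩⟩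
    rintro k ⟨l', hl', hlen', hprod'⟩
    have := (gen_lower hn l' hl').2
    rw [hprod', hlen'] at this
    exact this

lemma hop_stop {n : ℕ} {t q : ℤ} {u : Perm ℤ} (h : ¬ HopStep n u t q) :
    hop n t [q] u = u := by
  rw [hop]
  split <;> simp_all

lemma hop_go {n : ℕ} {t q : ℤ} {u : Perm ℤ} (h : HopStep n u t q) :
    hop n t [q] u = hop n t [q] (hswap t q * u) := by
  rw [hop]
  split <;> simp_all

lemma final (n : ℕ) (hn : 2 ≤ n)
    (dem : Perm ℤ → Perm ℤ → Perm ℤ) (hdem : IsDemazure n dem)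
    (w : Perm ℤ) (hw : IsEvenSignedPerm n w) :
    dem (sgen n n) w = hop n ((n : ℤ) - 1) [-(n : ℤ)] (sgen n n * w) := by
  have hsw := hw.1
  have hwinv := sp_inv hsw
  have hsq : sgen n n * sgen n n = 1 := sgen_sq hn (by omega) le_rfl
  have hsninv : (sgen n n)⁻¹ = sgen n n := by
    rw [← mul_eq_one_iff_inv_eq]
    exact hsq
  have hg1 : sgen n n ((n:ℤ)-1) = -(n:ℤ) := by
    rw [sgen_n_apply hn]; split_ifs <;> omega
  have hg4 : sgen n n (-(n:ℤ)) = (n:ℤ)-1 := by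
    rw [sgen_n_apply hn]; split_ifs <;> omega
  have hswap_eq : hswap ((n:ℤ)-1) (-(n:ℤ)) = sgen n n := by
    unfold hswap
    rw [if_neg (by omega : ¬ ((n:ℤ)-1 = -(-(n:ℤ))))]
    have : Equiv.swap (-((n:ℤ)-1)) (-(-(n:ℤ))) = Equiv.swap (n:ℤ) (-((n:ℤ)-1)) := by
      rw [neg_neg, Equiv.swap_comm]
    rw [this]
    simp only [sgen, if_pos rfl, ite_true]
  -- inverse computations
  have hi1 : (sgen n n * w)⁻¹ ((n:ℤ)-1) = w⁻¹ (-(n:ℤ)) := by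
    rw [mul_inv_rev, Equiv.Perm.mul_apply, hsninv, hg1]
  have hi2 : (sgen n n * w)⁻¹ (-(n:ℤ)) = w⁻¹ ((n:ℤ)-1) := by
    rw [mul_inv_rev, Equiv.Perm.mul_apply, hsninv, hg4]
  -- basic bounds
  have hz1 : w⁻¹ ((n:ℤ)-1) ≠ 0 := sp_ne_zero hwinv (by omega)
  have hz2 : w⁻¹ (-(n:ℤ)) ≠ 0 := sp_ne_zero hwinv (by omega)
  have hb1 : |w⁻¹ ((n:ℤ)-1)| ≤ (n:ℤ) := sp_abs_le hwinv (by rw [abs_of_pos (by omega)]; omega)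
  have hb2 : |w⁻¹ (-(n:ℤ))| ≤ (n:ℤ) := sp_abs_le hwinv (by rw [abs_neg, abs_of_pos (by omega)])
  have hk1 := dkey_bounds hz1 hb1
  have hk2 := dkey_bounds hz2 hb2
  have hne : dkey n (w⁻¹ ((n:ℤ)-1)) ≠ dkey n (w⁻¹ (-(n:ℤ))) := by
    intro he
    have := dkey_inj' hz1 hb1 hz2 hb2 he
    have := w⁻¹.injective this
    omega
  -- the hop step condition
  have hstep : HopStep n (sgen n n * w) ((n:ℤ)-1) (-(n:ℤ)) ↔
      dkey n (w⁻¹ (-(n:ℤ))) < dkey n (w⁻¹ ((n:ℤ)-1)) := by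
    constructor
    · intro h
      have h3 := h.2.2.1
      rw [hi1, hi2] at h3
      exact h3
    · intro h
      refine ⟨⟨by omega, by rw [abs_neg, abs_of_pos (by omega)]⟩, ?_, ?_, ?_⟩
      · show dkey n ((n:ℤ)-1) < dkey n (-(n:ℤ))
        rw [dkey_pos' (by omega) (by omega), dkey_neg' (by omega) (by omega)]
        omega
      · rw [hi1, hi2]; exact h
      · rw [hi2]; omega
  -- Demazure axioms for the generator n
  have hax := hdem.2.2.2 n (by omega) le_rfl w hw
  have hevsn : IsEvenSignedPerm n (sgen n n * w) := even_mul_sgen hn (by omega) le_rfl hw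
  have hLw := dlength_eq hn hw
  have hLsw := dlength_eq hn hevsn
  have hdelta := delta_n hn hsw
  have hCdef : CritD n n w ↔ dkey n (w⁻¹ ((n:ℤ)-1)) < dkey n (w⁻¹ (-(n:ℤ))) := by
    simp only [CritD, if_pos rfl, ite_true]
  by_cases hC : dkey n (w⁻¹ ((n:ℤ)-1)) < dkey n (w⁻¹ (-(n:ℤ)))
  · -- length goes up : dem = sgen n n * w ; hop stops immediately
    have hM := hdelta.1 (hCdef.mpr hC)
    have hlt : DLength n w < DLength n (sgen n n * w) := by omega
    rw [(hax.1 hlt)]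
    rw [hop_stop (by rw [hstep]; omega)]
  · -- length goes down : dem = w ; hop does one step then stops
    have hM := hdelta.2 (fun hcc => hC (hCdef.mp hcc))
    have hlt : DLength n (sgen n n * w) < DLength n w := by omega
    rw [(hax.2 hlt)]
    rw [hop_go (hstep.mpr (by omega))]
    rw [hswap_eq, ← mul_assoc, hsq, one_mul]
    rw [hop_stop ?_]
    intro h
    have h3 := h.2.2.1
    rw [hCdef] at *
    exact hC h3

end DnAux

/-- for `w ∈ D_n`, `s_n ⋆ w = h_{n-1,[-n]}(s_n·w)`. -/
theorem demazure_last_gen_as_hopping (n : ℕ) (hn : 2 ≤ n)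
    (dem : Perm ℤ → Perm ℤ → Perm ℤ) (hdem : IsDemazure n dem)
    (w : Perm ℤ) (hw : IsEvenSignedPerm n w) :
    dem (sgen n n) w = hop n ((n : ℤ) - 1) [-(n : ℤ)] (sgen n n * w) := by
  exact DnAux.final n hn dem hdem w hw
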